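/- Let k ≥ 3 and let ξ be a nonnegative integer random variable with E ξ = 1, Var ξ = σ² > 0, E ξ^{k+1} < ∞, and P{ξ ≥ k} > 0. Let q_x = P{𝒦(T) = x} for an unconditional ξ-Galton-Watson tree T. Then there exists x* such that for all x ≥ x*, q_x ≤ √(3 μ_k/σ²) · q_{x-1}^{k/2}, where μ_k = E binom(ξ, k). -/

import Mathlib

open scoped ENNReal

/-- Finite rooted ordered trees. -/
inductive RTree : Type where
  | node : List RTree → RTree

namespace RTree

/-- Number of nodes of a rooted tree. -/
def size : RTree → ℕ
  | node ts => 1 + (ts.attach.map (fun x => size x.1)).sum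
decreasing_by simp only [RTree.node.sizeOf_spec]; have := List.sizeOf_lt_of_mem x.2; omega

/-- The (standard) Horton-Strahler number: `0` at leaves; at an internal node, the
maximum of the children's values, plus one if the maximum is attained at least twice. -/
def HS : RTree → ℕ
  | node ts =>
    let vals := ts.attach.map (fun x => HS x.1)
    let m := vals.foldr max 0
    m + (if 2 ≤ (vals.filter (fun v => v == m)).length then 1 else 0)
decreasing_by simp only [RTree.node.sizeOf_spec]; have := List.sizeOf_lt_of_mem x.2; omega

/-- The French Horton-Strahler number: with children values sorted decreasingly as
`v₁ ≥ v₂ ≥ ⋯ ≥ v_k`, it equals `max_i (v_i + (i-1))`. -/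
def Fr : RTree → ℕ
  | node ts =>
    let vals := (ts.attach.map (fun x => Fr x.1)).mergeSort (fun a b => decide (b ≤ a))
    ((vals.zipIdx.map Prod.swap).map (fun p => p.2 + p.1)).foldr max 0
decreasing_by simp only [RTree.node.sizeOf_spec]; have := List.sizeOf_lt_of_mem x.2; omega

/-- The Canadian Horton-Strahler number: `v₁ + (r - 1)` where `r` is the number of
children attaining the maximal value `v₁`. -/
def Can : RTree → ℕ
  | node ts =>
    let vals := ts.attach.map (fun x => Can x.1)
    let m := vals.foldr max 0
    if vals.length = 0 then 0
    else m + ((vals.filter (fun v => v == m)).length - 1)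
decreasing_by simp only [RTree.node.sizeOf_spec]; have := List.sizeOf_lt_of_mem x.2; omega

/-- The rigid Horton-Strahler number: max of children's values, plus one if the node has
at least two children and all children attain the maximum. -/
def Rig : RTree → ℕ
  | node ts =>
    let vals := ts.attach.map (fun x => Rig x.1)
    let m := vals.foldr max 0
    if vals.length ≤ 1 then m
    else m + (if vals.all (fun v => v == m) then 1 else 0)
decreasing_by simp only [RTree.node.sizeOf_spec]; have := List.sizeOf_lt_of_mem x.2; omega

/-- The `k`-ary register function: with children values sorted decreasingly as
`𝒦₁ ≥ ⋯ ≥ 𝒦_ℓ`, it equals `max {𝒦₁, 𝒦_k + 1}` if `ℓ ≥ k` and `𝒦₁` otherwise. -/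
def Kreg (k : ℕ) : RTree → ℕ
  | node ts =>
    let vals := (ts.attach.map (fun x => Kreg k x.1)).mergeSort (fun a b => decide (b ≤ a))
    if k ≤ vals.length then max (vals.headD 0) (vals.getD (k - 1) 0 + 1)
    else vals.headD 0
decreasing_by simp only [RTree.node.sizeOf_spec]; have := List.sizeOf_lt_of_mem x.2; omega

/-- The Galton-Watson weight of a finite tree: the product over all nodes of the
offspring probability of the node's number of children.  For an offspring distribution
`p` summing to one, `∑' t with property P, gwWeight p t` is the probability that the
(almost surely finite) Galton-Watson tree satisfies `P`. -/
noncomputable def gwWeight (p : ℕ → ℝ≥0∞) : RTree → ℝ≥0∞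
  | node ts => p ts.length * (ts.attach.map (fun x => gwWeight p x.1)).prod
decreasing_by simp only [RTree.node.sizeOf_spec]; have := List.sizeOf_lt_of_mem x.2; omega

/-- The preorder degree sequence of a tree. -/
def degSeq : RTree → List ℕ
  | node ts => ts.length :: (ts.attach.map (fun x => degSeq x.1)).flatten
decreasing_by simp only [RTree.node.sizeOf_spec]; have := List.sizeOf_lt_of_mem x.2; omega

/-- Maximal number of children of any node in the tree. -/
def maxDeg : RTree → ℕ
  | node ts => max ts.length ((ts.attach.map (fun x => maxDeg x.1)).foldr max 0)
decreasing_by simp only [RTree.node.sizeOf_spec]; have := List.sizeOf_lt_of_mem x.2; omega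

/-- `EmbedsCBT h T`: a complete binary tree of height `h` embeds (in the topological
minor sense) into `T`. -/
inductive EmbedsCBT : ℕ → RTree → Prop where
  | zero (t : RTree) : EmbedsCBT 0 t
  | child (h : ℕ) (ts : List RTree) (t : RTree) (ht : t ∈ ts) (he : EmbedsCBT h t) :
      EmbedsCBT h (.node ts)
  | split (h : ℕ) (ts : List RTree) (i j : Fin ts.length) (hij : i ≠ j)
      (hi : EmbedsCBT h ts[i]) (hj : EmbedsCBT h ts[j]) :
      EmbedsCBT (h + 1) (.node ts)

/-- `EmbedsCKT k h T`: a complete `k`-ary tree of height `h` embeds into `T`. -/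
inductive EmbedsCKT (k : ℕ) : ℕ → RTree → Prop where
  | zero (t : RTree) : EmbedsCKT k 0 t
  | child (h : ℕ) (ts : List RTree) (t : RTree) (ht : t ∈ ts) (he : EmbedsCKT k h t) :
      EmbedsCKT k h (.node ts)
  | split (h : ℕ) (ts : List RTree) (s : Finset (Fin ts.length)) (hcard : s.card = k)
      (hall : ∀ i ∈ s, EmbedsCKT k h ts[i]) :
      EmbedsCKT k (h + 1) (.node ts)

end RTree


namespace RTree

def nodeEquiv : List RTree ≃ RTree where
  toFun := node
  invFun t := match t with | node ts => ts
  left_inv l := rfl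
  right_inv t := by cases t; rfl

lemma gwWeight_node (p : ℕ → ℝ≥0∞) (ts : List RTree) :
    gwWeight p (node ts) = p ts.length * (ts.map (gwWeight p)).prod := by
  rw [gwWeight]
  congr 2
  exact List.attach_map_val (l := ts)

lemma tsum_rtree (f : RTree → ℝ≥0∞) :
    ∑' t, f t = ∑' n : ℕ, ∑' v : Fin n → RTree, f (node (List.ofFn v)) := by
  rw [← nodeEquiv.tsum_eq f]
  simp only [nodeEquiv, Equiv.coe_fn_mk]
  have h2 := (List.equivSigmaTuple (α := RTree)).symm.tsum_eq
      (fun l : List RTree => f (node l))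
  rw [← h2]
  simp only [List.equivSigmaTuple_symm_apply]
  exact ENNReal.tsum_sigma (fun n (v : Fin n → RTree) => f (node (List.ofFn v)))

lemma tsum_pi_prod : ∀ (n : ℕ) (g : Fin n → RTree → ℝ≥0∞),
    ∑' v : Fin n → RTree, ∏ i, g i (v i) = ∏ i, ∑' t, g i t := by
  intro n
  induction n with
  | zero =>
    intro g
    simp only [Finset.univ_eq_empty, Finset.prod_empty]
    exact tsum_eq_single (fun i => i.elim0) (fun b hb => absurd (Subsingleton.elim b _) hb)
  | succ n ih =>
    intro g
    rw [← (Fin.consEquiv (fun _ : Fin (n+1) => RTree)).tsum_eq]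
    rw [ENNReal.tsum_prod']
    have : ∀ (a : RTree) (u : Fin n → RTree),
        ∏ i, g i (((Fin.consEquiv (fun _ : Fin (n+1) => RTree)) (a, u)) i)
          = g 0 a * ∏ i, g i.succ (u i) := by
      intro a u
      rw [Fin.prod_univ_succ]
      rfl
    simp only [this]
    simp only [ENNReal.tsum_mul_left, ENNReal.tsum_mul_right]
    rw [Fin.prod_univ_succ, ih (fun i => g i.succ)]

lemma tsum_gw (p : ℕ → ℝ≥0∞) (φ : RTree → ℝ≥0∞) :
    ∑' t, gwWeight p t * φ t
      = ∑' n : ℕ, p n * ∑' v : Fin n → RTree,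
          (∏ i, gwWeight p (v i)) * φ (node (List.ofFn v)) := by
  rw [tsum_rtree (fun t => gwWeight p t * φ t)]
  congr 1; funext n
  rw [← ENNReal.tsum_mul_left]
  congr 1; funext v
  rw [gwWeight_node, List.map_ofFn, List.prod_ofFn]
  simp only [List.length_ofFn, Function.comp]
  ring

open Finset in

lemma choose_card_eq_sum {n : ℕ} (P : Fin n → Prop) [DecidablePred P] (j : ℕ) :
    ((Finset.univ.filter P).card.choose j)
      = ∑ S ∈ Finset.powersetCard j (Finset.univ : Finset (Fin n)),
          (if ∀ i ∈ S, P i then 1 else 0) := by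
  rw [← Finset.card_powersetCard j (Finset.univ.filter P)]
  have : Finset.powersetCard j (Finset.univ.filter P)
      = (Finset.powersetCard j (Finset.univ : Finset (Fin n))).filter
          (fun S => ∀ i ∈ S, P i) := by
    ext S
    simp only [Finset.mem_powersetCard, Finset.mem_filter, Finset.subset_iff,
      Finset.mem_filter, Finset.mem_univ, true_and]
    tauto
  rw [this, Finset.card_filter]

open Finset in

lemma tsum_choose_moment (p : ℕ → ℝ≥0∞) (n j : ℕ) (P : RTree → Prop) [DecidablePred P] :
    ∑' v : Fin n → RTree, (∏ i, gwWeight p (v i)) *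
        (((Finset.univ.filter fun i => P (v i)).card.choose j : ℕ) : ℝ≥0∞)
      = (n.choose j : ℝ≥0∞) * (∑' t, if P t then gwWeight p t else 0) ^ j
          * (∑' t, gwWeight p t) ^ (n - j) := by
  classical
  have step1 : ∀ v : Fin n → RTree,
      (∏ i, gwWeight p (v i)) *
        (((Finset.univ.filter fun i => P (v i)).card.choose j : ℕ) : ℝ≥0∞)
      = ∑ S ∈ Finset.powersetCard j (Finset.univ : Finset (Fin n)),
          ∏ i, (gwWeight p (v i) * (if i ∈ S then (if P (v i) then 1 else 0) else 1)) := by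
    intro v
    rw [choose_card_eq_sum (fun i => P (v i)) j]
    push_cast
    rw [Finset.mul_sum]
    congr 1; funext S
    rw [Finset.prod_mul_distrib]
    congr 1
    rw [Finset.prod_ite_mem Finset.univ S (fun i => if P (v i) then (1:ℝ≥0∞) else 0)]
    rw [Finset.univ_inter, Finset.prod_boole]
    congr 1
  calc ∑' v : Fin n → RTree, (∏ i, gwWeight p (v i)) *
        (((Finset.univ.filter fun i => P (v i)).card.choose j : ℕ) : ℝ≥0∞)
      = ∑' v : Fin n → RTree, ∑ S ∈ Finset.powersetCard j (Finset.univ : Finset (Fin n)),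
          ∏ i, (gwWeight p (v i) * (if i ∈ S then (if P (v i) then 1 else 0) else 1)) := by
        exact tsum_congr step1
    _ = ∑ S ∈ Finset.powersetCard j (Finset.univ : Finset (Fin n)),
          ∑' v : Fin n → RTree,
          ∏ i, (gwWeight p (v i) * (if i ∈ S then (if P (v i) then 1 else 0) else 1)) := by
        exact Summable.tsum_finsetSum (fun S _ => ENNReal.summable)
    _ = ∑ S ∈ Finset.powersetCard j (Finset.univ : Finset (Fin n)),
          ∏ i : Fin n, (if i ∈ S then (∑' t, if P t then gwWeight p t else 0)
            else (∑' t, gwWeight p t)) := by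
        refine Finset.sum_congr rfl (fun S _ => ?_)
        rw [tsum_pi_prod n (fun i t => gwWeight p t * (if i ∈ S then (if P t then 1 else 0) else 1))]
        refine Finset.prod_congr rfl (fun i _ => ?_)
        by_cases hi : i ∈ S <;> simp [hi, mul_ite]
    _ = ∑ S ∈ Finset.powersetCard j (Finset.univ : Finset (Fin n)),
          (∑' t, if P t then gwWeight p t else 0) ^ j * (∑' t, gwWeight p t) ^ (n - j) := by
        refine Finset.sum_congr rfl (fun S hS => ?_)
        rw [Finset.mem_powersetCard] at hS
        rw [Finset.prod_ite (fun _ => (∑' t, if P t then gwWeight p t else 0))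
          (fun _ => (∑' t, gwWeight p t))]
        rw [Finset.prod_const, Finset.prod_const]
        congr 2
        · rw [Finset.filter_mem_eq_inter, Finset.univ_inter, hS.2]
        · rw [Finset.filter_not, Finset.filter_mem_eq_inter, Finset.univ_inter,
            Finset.card_sdiff_of_subset (Finset.subset_univ S), Finset.card_univ, Fintype.card_fin, hS.2]
    _ = (n.choose j : ℝ≥0∞) * (∑' t, if P t then gwWeight p t else 0) ^ j
          * (∑' t, gwWeight p t) ^ (n - j) := by
        rw [Finset.sum_const, Finset.card_powersetCard, Finset.card_univ, Fintype.card_fin,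
          nsmul_eq_mul, mul_assoc]

lemma choose2_le (A : ℕ) : A.choose 2 ≤ A + A.choose 3 := by
  induction A with
  | zero => simp
  | succ B ih =>
    have h1 : (B+1).choose 2 = B.choose 1 + B.choose 2 := Nat.choose_succ_succ B 1
    have h2 : (B+1).choose 3 = B.choose 2 + B.choose 3 := Nat.choose_succ_succ B 2
    have h3 : B.choose 1 = B := Nat.choose_one_right B
    omega

lemma choose2_le' (A : ℕ) (hA : 1 ≤ A) : 1 + A.choose 2 ≤ A + A.choose 3 := by
  obtain ⟨B, rfl⟩ : ∃ B, A = B + 1 := ⟨A - 1, by omega⟩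
  have h1 : (B+1).choose 2 = B.choose 1 + B.choose 2 := Nat.choose_succ_succ B 1
  have h2 : (B+1).choose 3 = B.choose 2 + B.choose 3 := Nat.choose_succ_succ B 2
  have h3 : B.choose 1 = B := Nat.choose_one_right B
  omega

lemma bonferroni (P : Prop) [Decidable P] (A M k : ℕ) (h : P → 1 ≤ A ∨ k ≤ M) :
    (if P then 1 else 0) + A.choose 2 ≤ A.choose 1 + A.choose 3 + M.choose k := by
  rw [Nat.choose_one_right]
  by_cases hP : P
  · simp only [hP, if_true]
    rcases h hP with h1 | h1
    · have := choose2_le' A h1; omega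
    · have := choose2_le A
      have : 1 ≤ M.choose k := Nat.choose_pos h1
      omega
  · simp only [hP, if_false]
    have := choose2_le A
    omega

lemma kreg_node_unfold (k : ℕ) (ts : List RTree) :
    Kreg k (node ts)
      = (if k ≤ ((ts.map (Kreg k)).mergeSort (fun a b => decide (b ≤ a))).length
          then max (((ts.map (Kreg k)).mergeSort (fun a b => decide (b ≤ a))).headD 0)
            (((ts.map (Kreg k)).mergeSort (fun a b => decide (b ≤ a))).getD (k - 1) 0 + 1)
          else ((ts.map (Kreg k)).mergeSort (fun a b => decide (b ≤ a))).headD 0) := by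
  rw [Kreg]
  rw [List.attach_map_val (l := ts) (f := Kreg k)]

lemma sorted_mergeSort_ge (l : List ℕ) :
    List.Pairwise (fun a b => b ≤ a)
      (l.mergeSort (fun a b => decide (b ≤ a))) := by
  have := List.pairwise_mergeSort (le := fun (a b : ℕ) => decide (b ≤ a))
    (by intro a b c h1 h2; simp only [decide_eq_true_eq] at *; omega)
    (by intro a b; simp only [Bool.or_eq_true, decide_eq_true_eq]; omega) l
  refine this.imp ?_
  intro a b h; simpa using h

/-- k-th largest at least y implies at least k elements at least y -/

lemma count_ge_of_sorted (L : List ℕ) (hs : List.Pairwise (fun a b => b ≤ a) L)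
    (k y : ℕ) (hk : 1 ≤ k) (hlen : k ≤ L.length) (hy : y ≤ L[k-1]'(by omega)) :
    k ≤ L.countP (fun m => decide (y ≤ m)) := by
  have hsplit : L.countP (fun m => decide (y ≤ m))
      = (L.take k).countP (fun m => decide (y ≤ m))
        + (L.drop k).countP (fun m => decide (y ≤ m)) := by
    rw [← List.countP_append, List.take_append_drop]
  have htake : (L.take k).countP (fun m => decide (y ≤ m)) = (L.take k).length := by
    rw [List.countP_eq_length]
    intro a ha
    rw [List.mem_iff_getElem] at ha
    obtain ⟨i, hi, rfl⟩ := ha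
    have hi' : i < k := by
      have := hi; rw [List.length_take] at this; omega
    rw [List.getElem_take]
    simp only [decide_eq_true_eq]
    have hik : i ≤ k - 1 := by omega
    rcases Nat.lt_or_ge i (k-1) with hlt | hge
    · have := (List.pairwise_iff_getElem.mp hs) i (k-1) (by omega) (by omega) hlt
      omega
    · have : i = k - 1 := by omega
      subst this; exact hy
  have : (L.take k).length = k := by rw [List.length_take]; omega
  omega

/-- main combinatorial implication at the root -/

lemma kreg_node_imp (k x : ℕ) (hk : 3 ≤ k) (ts : List RTree)
    (h : x + 1 ≤ Kreg k (node ts)) :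
    (∃ c ∈ ts, x + 1 ≤ Kreg k c)
      ∨ k ≤ ts.countP (fun c => decide (x ≤ Kreg k c)) := by
  rw [kreg_node_unfold] at h
  set L := (ts.map (Kreg k)).mergeSort (fun a b => decide (b ≤ a)) with hL
  have hperm : L.Perm (ts.map (Kreg k)) := List.mergeSort_perm _ _
  have hhead : x + 1 ≤ L.headD 0 → ∃ c ∈ ts, x + 1 ≤ Kreg k c := by
    intro hh
    have hm : L.headD 0 ∈ L := by
      cases hL2 : L with
      | nil => rw [hL2] at hh; simp at hh
      | cons a l => simp
    rw [hperm.mem_iff, List.mem_map] at hm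
    obtain ⟨c, hc, hceq⟩ := hm
    exact ⟨c, hc, by omega⟩
  by_cases hlen : k ≤ L.length
  · rw [if_pos hlen] at h
    rcases le_max_iff.mp h with h1 | h1
    · exact Or.inl (hhead h1)
    · right
      have hgd : L.getD (k-1) 0 = L[k-1]'(by omega) := List.getD_eq_getElem L 0 (by omega)
      have hy : x ≤ L[k-1]'(by omega) := by omega
      have := count_ge_of_sorted L (sorted_mergeSort_ge _) k x (by omega) hlen hy
      rwa [hperm.countP_eq, List.countP_map] at this
  · rw [if_neg hlen] at h
    exact Or.inl (hhead h)

lemma countP_ofFn {n : ℕ} (g : Fin n → RTree) (q : RTree → Bool) :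
    (List.ofFn g).countP q = (Finset.univ.filter (fun i => q (g i) = true)).card := by
  induction n with
  | zero => rw [List.ofFn_zero, List.countP_nil]; simp
  | succ m ih =>
    rw [List.ofFn_succ, List.countP_cons, ih (fun i => g i.succ)]
    rw [Finset.card_filter, Finset.card_filter, Fin.sum_univ_succ]
    by_cases h0 : q (g 0) = true <;> simp [h0, add_comm]

lemma size_node (ts : List RTree) : size (node ts) = 1 + (ts.map size).sum := by
  rw [size, List.attach_map_val (l := ts) (f := size)]

lemma one_le_size (t : RTree) : 1 ≤ size t := by
  cases t with | node ts => rw [size_node]; omega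

lemma tsum_size_le (p : ℕ → ℝ≥0∞) (hsum : ∑' i : ℕ, p i = 1) :
    ∀ N : ℕ, ∑' t : RTree, (if size t ≤ N then gwWeight p t else 0) ≤ 1 := by
  intro N
  induction N with
  | zero =>
    have : ∀ t : RTree, (if size t ≤ 0 then gwWeight p t else 0) = 0 := by
      intro t
      rw [if_neg]
      have := one_le_size t; omega
    simp only [this, tsum_zero]; exact zero_le_one
  | succ N ih =>
    have h0 : ∀ t : RTree, (if size t ≤ N + 1 then gwWeight p t else 0)
        = gwWeight p t * (if size t ≤ N + 1 then 1 else 0) := by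
      intro t; by_cases h : size t ≤ N + 1 <;> simp [h]
    calc ∑' t : RTree, (if size t ≤ N + 1 then gwWeight p t else 0)
        = ∑' n : ℕ, p n * ∑' v : Fin n → RTree,
            (∏ i, gwWeight p (v i)) * (if size (node (List.ofFn v)) ≤ N + 1 then 1 else 0) := by
          simp only [h0]; exact tsum_gw p _
      _ ≤ ∑' n : ℕ, p n * ∑' v : Fin n → RTree,
            ∏ i, (gwWeight p (v i) * (if size (v i) ≤ N then 1 else 0)) := by
          refine ENNReal.tsum_le_tsum (fun n => ?_)
          refine mul_le_mul_right (ENNReal.tsum_le_tsum (fun v => ?_)) _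
          by_cases hs : size (node (List.ofFn v)) ≤ N + 1
          · rw [if_pos hs, mul_one, Finset.prod_mul_distrib]
            have : ∀ i : Fin n, (if size (v i) ≤ N then (1:ℝ≥0∞) else 0) = 1 := by
              intro i
              rw [if_pos]
              have hm : size (v i) ≤ ((List.ofFn v).map size).sum := by
                refine List.single_le_sum (by simp) _ ?_
                rw [List.map_ofFn]
                rw [List.mem_ofFn]
                exact ⟨i, rfl⟩
              rw [size_node] at hs
              omega
            simp only [this, Finset.prod_const_one, mul_one]
            exact le_refl _
          · rw [if_neg hs, mul_zero]; exact zero_le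
      _ = ∑' n : ℕ, p n * (∑' t : RTree, (if size t ≤ N then gwWeight p t else 0)) ^ n := by
          congr 1; funext n
          congr 1
          rw [tsum_pi_prod n (fun i t => gwWeight p t * (if size t ≤ N then 1 else 0))]
          rw [Finset.prod_const, Finset.card_univ, Fintype.card_fin]
          congr 1
          refine tsum_congr (fun t => ?_)
          by_cases h : size t ≤ N <;> simp [h]
      _ ≤ ∑' n : ℕ, p n * 1 := by
          refine ENNReal.tsum_le_tsum (fun n => ?_)
          exact mul_le_mul_right (pow_le_one' ih n) _
      _ = 1 := by simp only [mul_one]; exact hsum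

lemma W_le_one (p : ℕ → ℝ≥0∞) (hsum : ∑' i : ℕ, p i = 1) :
    ∑' t : RTree, gwWeight p t ≤ 1 := by
  rw [ENNReal.tsum_eq_iSup_sum]
  refine iSup_le (fun F => ?_)
  calc ∑ t ∈ F, gwWeight p t
      = ∑ t ∈ F, (if size t ≤ F.sup size then gwWeight p t else 0) := by
        refine Finset.sum_congr rfl (fun t ht => ?_)
        rw [if_pos (Finset.le_sup ht)]
    _ ≤ ∑' t : RTree, (if size t ≤ F.sup size then gwWeight p t else 0) :=
        ENNReal.sum_le_tsum F
    _ ≤ 1 := tsum_size_le p hsum _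

noncomputable def sfun (p : ℕ → ℝ≥0∞) (k x : ℕ) : ℝ≥0∞ :=
  ∑' t : RTree, if x ≤ Kreg k t then gwWeight p t else 0

noncomputable def qfun (p : ℕ → ℝ≥0∞) (k x : ℕ) : ℝ≥0∞ :=
  ∑' t : RTree, if Kreg k t = x then gwWeight p t else 0

lemma sfun_eq_add (p : ℕ → ℝ≥0∞) (k x : ℕ) :
    sfun p k x = qfun p k x + sfun p k (x + 1) := by
  rw [sfun, qfun, sfun, ← ENNReal.tsum_add]
  refine tsum_congr (fun t => ?_)
  rcases Nat.lt_trichotomy (Kreg k t) x with h | h | h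
  · rw [if_neg (by omega), if_neg (by omega), if_neg (by omega)]; simp
  · rw [if_pos (by omega), if_pos (by omega), if_neg (by omega)]; simp
  · rw [if_pos (by omega), if_neg (by omega), if_pos (by omega)]; simp

lemma sfun_le (p : ℕ → ℝ≥0∞) (hsum : ∑' i : ℕ, p i = 1) (k x : ℕ) :
    sfun p k x ≤ 1 := by
  refine le_trans ?_ (W_le_one p hsum)
  refine ENNReal.tsum_le_tsum (fun t => ?_)
  by_cases h : x ≤ Kreg k t <;> simp [h]

lemma sfun_eq_tsum (p : ℕ → ℝ≥0∞) (k x : ℕ) :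
    sfun p k x = ∑' i : ℕ, qfun p k (i + x) := by
  rw [sfun]
  have : ∀ t : RTree, (if x ≤ Kreg k t then gwWeight p t else 0)
      = ∑' i : ℕ, (if Kreg k t = i + x then gwWeight p t else 0) := by
    intro t
    by_cases h : x ≤ Kreg k t
    · rw [if_pos h]
      rw [tsum_eq_single (Kreg k t - x) (fun i hi => by rw [if_neg (by omega)])]
      rw [if_pos (by omega)]
    · rw [if_neg h]
      symm
      simp only [ENNReal.tsum_eq_zero]
      intro i; rw [if_neg (by omega)]
  simp only [this]
  rw [ENNReal.tsum_comm]
  rfl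

lemma qfun_total (p : ℕ → ℝ≥0∞) (hsum : ∑' i : ℕ, p i = 1) :
    ∑' x : ℕ, qfun p k x ≤ 1 := by
  have h := sfun_le p hsum k 0
  rw [sfun_eq_tsum] at h
  simpa using h

lemma sfun_tendsto (p : ℕ → ℝ≥0∞) (hsum : ∑' i : ℕ, p i = 1) (k : ℕ) :
    Filter.Tendsto (sfun p k) Filter.atTop (nhds 0) := by
  have h1 : ∑' x : ℕ, qfun p k x ≠ ⊤ := by
    refine ne_top_of_le_ne_top ?_ (qfun_total p hsum)
    exact ENNReal.one_ne_top
  have := ENNReal.tendsto_sum_nat_add (qfun p k) h1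
  refine this.congr (fun x => ?_)
  rw [sfun_eq_tsum]

noncomputable def mcoef (p : ℕ → ℝ≥0∞) (j : ℕ) : ℝ≥0∞ :=
  ∑' n : ℕ, (n.choose j : ℝ≥0∞) * p n * (∑' t : RTree, gwWeight p t) ^ (n - j)

lemma sfun_decomp (p : ℕ → ℝ≥0∞) (k x : ℕ) :
    sfun p k x = ∑' n : ℕ, p n * ∑' v : Fin n → RTree,
      (∏ i, gwWeight p (v i)) * (if x ≤ Kreg k (node (List.ofFn v)) then 1 else 0) := by
  rw [sfun]
  have : ∀ t : RTree, (if x ≤ Kreg k t then gwWeight p t else 0)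
      = gwWeight p t * (if x ≤ Kreg k t then 1 else 0) := by
    intro t; by_cases h : x ≤ Kreg k t <;> simp [h]
  simp only [this]
  exact tsum_gw p _

lemma moment_decomp (p : ℕ → ℝ≥0∞) (j : ℕ) (P : RTree → Prop) [DecidablePred P] :
    ∑' n : ℕ, p n * ∑' v : Fin n → RTree, (∏ i, gwWeight p (v i)) *
        (((Finset.univ.filter fun i => P (v i)).card.choose j : ℕ) : ℝ≥0∞)
      = mcoef p j * (∑' t : RTree, if P t then gwWeight p t else 0) ^ j := by
  rw [mcoef, ← ENNReal.tsum_mul_right]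
  refine tsum_congr (fun n => ?_)
  rw [tsum_choose_moment p n j P]
  ring

lemma master (p : ℕ → ℝ≥0∞) (k : ℕ) (hk : 3 ≤ k) (x : ℕ) :
    sfun p k (x+1) + mcoef p 2 * sfun p k (x+1) ^ 2
      ≤ mcoef p 1 * sfun p k (x+1) + mcoef p 3 * sfun p k (x+1) ^ 3
        + mcoef p k * sfun p k x ^ k := by
  classical
  set P1 : RTree → Prop := fun t => x + 1 ≤ Kreg k t with hP1
  set P0 : RTree → Prop := fun t => x ≤ Kreg k t with hP0
  have hs' : (∑' t : RTree, if P1 t then gwWeight p t else 0) = sfun p k (x+1) := rfl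
  have hs : (∑' t : RTree, if P0 t then gwWeight p t else 0) = sfun p k x := rfl
  -- pointwise inequality
  have key : ∀ (n : ℕ) (v : Fin n → RTree),
      (∏ i, gwWeight p (v i)) * (if x + 1 ≤ Kreg k (node (List.ofFn v)) then 1 else 0)
        + (∏ i, gwWeight p (v i)) *
          (((Finset.univ.filter fun i => P1 (v i)).card.choose 2 : ℕ) : ℝ≥0∞)
      ≤ ((∏ i, gwWeight p (v i)) *
          (((Finset.univ.filter fun i => P1 (v i)).card.choose 1 : ℕ) : ℝ≥0∞)
        + (∏ i, gwWeight p (v i)) *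
          (((Finset.univ.filter fun i => P1 (v i)).card.choose 3 : ℕ) : ℝ≥0∞))
        + (∏ i, gwWeight p (v i)) *
          (((Finset.univ.filter fun i => P0 (v i)).card.choose k : ℕ) : ℝ≥0∞) := by
    intro n v
    set A := (Finset.univ.filter fun i => P1 (v i)).card with hA
    set M := (Finset.univ.filter fun i => P0 (v i)).card with hM
    have himp : (x + 1 ≤ Kreg k (node (List.ofFn v))) → 1 ≤ A ∨ k ≤ M := by
      intro hP
      rcases kreg_node_imp k x hk (List.ofFn v) hP with ⟨c, hc, hxc⟩ | hcnt
      · left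
        rw [List.mem_ofFn] at hc
        obtain ⟨i, rfl⟩ := hc
        rw [hA]
        refine Finset.card_pos.mpr ⟨i, ?_⟩
        rw [Finset.mem_filter]
        exact ⟨Finset.mem_univ i, hxc⟩
      · right
        rw [countP_ofFn v (fun c => decide (x ≤ Kreg k c))] at hcnt
        rw [hM]
        refine le_trans hcnt (le_of_eq ?_)
        congr 1
        refine Finset.filter_congr (fun i _ => ?_)
        simp [hP0]
    have hbon := bonferroni (x + 1 ≤ Kreg k (node (List.ofFn v))) A M k himp
    rw [← mul_add, ← mul_add, ← mul_add]
    refine mul_le_mul_right ?_ _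
    have hcast : (if x + 1 ≤ Kreg k (node (List.ofFn v)) then (1:ℝ≥0∞) else 0)
        = (((if x + 1 ≤ Kreg k (node (List.ofFn v)) then 1 else 0 : ℕ)) : ℝ≥0∞) := by
      by_cases h : x + 1 ≤ Kreg k (node (List.ofFn v)) <;> simp [h]
    rw [hcast, ← Nat.cast_add, ← Nat.cast_add, ← Nat.cast_add]
    exact_mod_cast hbon
  calc sfun p k (x+1) + mcoef p 2 * sfun p k (x+1) ^ 2
      = ∑' n : ℕ, (p n * ∑' v : Fin n → RTree,
            (∏ i, gwWeight p (v i)) * (if x + 1 ≤ Kreg k (node (List.ofFn v)) then 1 else 0)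
          + p n * ∑' v : Fin n → RTree, (∏ i, gwWeight p (v i)) *
            (((Finset.univ.filter fun i => P1 (v i)).card.choose 2 : ℕ) : ℝ≥0∞)) := by
        rw [ENNReal.tsum_add]
        rw [← hs', ← moment_decomp p 2 P1]
        congr 1
        exact sfun_decomp p k (x+1)
    _ = ∑' n : ℕ, p n * ∑' v : Fin n → RTree,
          ((∏ i, gwWeight p (v i)) * (if x + 1 ≤ Kreg k (node (List.ofFn v)) then 1 else 0)
          + (∏ i, gwWeight p (v i)) *
            (((Finset.univ.filter fun i => P1 (v i)).card.choose 2 : ℕ) : ℝ≥0∞)) := by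
        refine tsum_congr (fun n => ?_)
        rw [ENNReal.tsum_add, mul_add]
    _ ≤ ∑' n : ℕ, p n * ∑' v : Fin n → RTree,
          (((∏ i, gwWeight p (v i)) *
            (((Finset.univ.filter fun i => P1 (v i)).card.choose 1 : ℕ) : ℝ≥0∞)
          + (∏ i, gwWeight p (v i)) *
            (((Finset.univ.filter fun i => P1 (v i)).card.choose 3 : ℕ) : ℝ≥0∞))
          + (∏ i, gwWeight p (v i)) *
            (((Finset.univ.filter fun i => P0 (v i)).card.choose k : ℕ) : ℝ≥0∞)) := by
        refine ENNReal.tsum_le_tsum (fun n => ?_)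
        refine mul_le_mul_right (ENNReal.tsum_le_tsum (fun v => ?_)) _
        exact key n v
    _ = mcoef p 1 * sfun p k (x+1) + mcoef p 3 * sfun p k (x+1) ^ 3
        + mcoef p k * sfun p k x ^ k := by
        have e1 : ∀ n : ℕ, (p n * ∑' v : Fin n → RTree,
            (((∏ i, gwWeight p (v i)) *
              (((Finset.univ.filter fun i => P1 (v i)).card.choose 1 : ℕ) : ℝ≥0∞)
            + (∏ i, gwWeight p (v i)) *
              (((Finset.univ.filter fun i => P1 (v i)).card.choose 3 : ℕ) : ℝ≥0∞))
            + (∏ i, gwWeight p (v i)) *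
              (((Finset.univ.filter fun i => P0 (v i)).card.choose k : ℕ) : ℝ≥0∞)))
            = (p n * ∑' v : Fin n → RTree, (∏ i, gwWeight p (v i)) *
              (((Finset.univ.filter fun i => P1 (v i)).card.choose 1 : ℕ) : ℝ≥0∞))
            + (p n * ∑' v : Fin n → RTree, (∏ i, gwWeight p (v i)) *
              (((Finset.univ.filter fun i => P1 (v i)).card.choose 3 : ℕ) : ℝ≥0∞))
            + (p n * ∑' v : Fin n → RTree, (∏ i, gwWeight p (v i)) *
              (((Finset.univ.filter fun i => P0 (v i)).card.choose k : ℕ) : ℝ≥0∞)) := by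
          intro n
          rw [ENNReal.tsum_add, ENNReal.tsum_add, mul_add, mul_add]
        simp only [e1]
        rw [ENNReal.tsum_add, ENNReal.tsum_add]
        rw [moment_decomp p 1 P1, moment_decomp p 3 P1, moment_decomp p k P0]
        rw [hs', hs, pow_one]

noncomputable def mucoef (p : ℕ → ℝ≥0∞) (j : ℕ) : ℝ≥0∞ :=
  ∑' n : ℕ, (n.choose j : ℝ≥0∞) * p n

lemma mcoef_le_mucoef (p : ℕ → ℝ≥0∞) (hsum : ∑' i : ℕ, p i = 1) (j : ℕ) :
    mcoef p j ≤ mucoef p j := by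
  refine ENNReal.tsum_le_tsum (fun n => ?_)
  calc (n.choose j : ℝ≥0∞) * p n * (∑' t : RTree, gwWeight p t) ^ (n - j)
      ≤ (n.choose j : ℝ≥0∞) * p n * 1 ^ (n - j) :=
        mul_le_mul_right (pow_le_pow_left' (W_le_one p hsum) _) _
    _ = (n.choose j : ℝ≥0∞) * p n := by rw [one_pow, mul_one]

lemma mcoef_eq_of_W_eq_one (p : ℕ → ℝ≥0∞) (hW : ∑' t : RTree, gwWeight p t = 1) (j : ℕ) :
    mcoef p j = mucoef p j := by
  rw [mcoef, mucoef]
  refine tsum_congr (fun n => ?_)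
  rw [hW, one_pow, mul_one]

lemma mucoef_one (p : ℕ → ℝ≥0∞) (hmean : ∑' i : ℕ, (i : ℝ≥0∞) * p i = 1) :
    mucoef p 1 = 1 := by
  rw [mucoef, ← hmean]
  refine tsum_congr (fun n => ?_)
  rw [Nat.choose_one_right]

lemma mucoef_two (p : ℕ → ℝ≥0∞) (hmean : ∑' i : ℕ, (i : ℝ≥0∞) * p i = 1) :
    2 * mucoef p 2 + 1 = ∑' i : ℕ, (i : ℝ≥0∞) ^ 2 * p i := by
  rw [mucoef, ← ENNReal.tsum_mul_left, ← hmean, ← ENNReal.tsum_add]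
  refine tsum_congr (fun n => ?_)
  rw [← mul_assoc, ← add_mul]
  congr 1
  have h : 2 * n.choose 2 + n = n ^ 2 := by
    induction n with
    | zero => rfl
    | succ m ih =>
      have h1 : (m+1).choose 2 = m.choose 1 + m.choose 2 := Nat.choose_succ_succ m 1
      have h2 : m.choose 1 = m := Nat.choose_one_right m
      have h3 : (m+1)^2 = m^2 + 2*m + 1 := by ring
      omega
  calc (2 : ℝ≥0∞) * (n.choose 2 : ℕ) + (n : ℕ)
      = ((2 * n.choose 2 + n : ℕ) : ℝ≥0∞) := by push_cast; ring
    _ = ((n ^ 2 : ℕ) : ℝ≥0∞) := by rw [h]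
    _ = (n : ℝ≥0∞) ^ 2 := by push_cast; ring

lemma mucoef_le_moment (p : ℕ → ℝ≥0∞) (j : ℕ) (hj : 1 ≤ j) (k : ℕ) (hjk : j ≤ k + 1) :
    mucoef p j ≤ ∑' i : ℕ, (i : ℝ≥0∞) ^ (k + 1) * p i := by
  refine ENNReal.tsum_le_tsum (fun n => ?_)
  refine mul_le_mul_left ?_ _
  rcases Nat.eq_zero_or_pos n with rfl | hn
  · rw [Nat.choose_eq_zero_of_lt (by omega)]; simp
  · have h1 : (n.choose j : ℝ≥0∞) ≤ ((n ^ j : ℕ) : ℝ≥0∞) := by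
      exact_mod_cast Nat.choose_le_pow n j
    have h2 : ((n ^ j : ℕ) : ℝ≥0∞) ≤ ((n ^ (k+1) : ℕ) : ℝ≥0∞) := by
      exact_mod_cast Nat.pow_le_pow_right hn (by omega)
    have h3 : ((n ^ (k+1) : ℕ) : ℝ≥0∞) = (n : ℝ≥0∞) ^ (k+1) := by push_cast; ring
    exact le_of_le_of_eq (h1.trans h2) h3

lemma mucoef_pos (p : ℕ → ℝ≥0∞) (k : ℕ) (hpk : ∃ i, k ≤ i ∧ 0 < p i) :
    0 < mucoef p k := by
  obtain ⟨i, hik, hpi⟩ := hpk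
  calc (0 : ℝ≥0∞) < 1 * p i := by simpa using hpi
    _ ≤ (i.choose k : ℝ≥0∞) * p i := by
      refine mul_le_mul_left ?_ _
      exact_mod_cast Nat.choose_pos hik
    _ ≤ mucoef p k := ENNReal.le_tsum i

lemma mcoef_one_lt (p : ℕ → ℝ≥0∞) (hmean : ∑' i : ℕ, (i : ℝ≥0∞) * p i = 1)
    (hW : ∑' t : RTree, gwWeight p t < 1) (i : ℕ) (hik : 3 ≤ i) (hpi : 0 < p i)
    (hpitop : p i ≠ ⊤) :
    mcoef p 1 < 1 := by
  rw [← hmean]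
  rw [mcoef]
  refine ENNReal.tsum_lt_tsum (i := i) ?_ (fun n => ?_) ?_
  · have hb : (∑' n : ℕ, (n : ℝ≥0∞) * p n) ≠ ⊤ := by
      rw [hmean]; exact ENNReal.one_ne_top
    refine ne_top_of_le_ne_top hb ?_
    refine ENNReal.tsum_le_tsum (fun n => ?_)
    rw [Nat.choose_one_right]
    calc (n : ℝ≥0∞) * p n * (∑' t : RTree, gwWeight p t) ^ (n - 1)
        ≤ (n : ℝ≥0∞) * p n * 1 ^ (n - 1) :=
          mul_le_mul_right (pow_le_pow_left' (le_of_lt hW) _) _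
      _ = (n : ℝ≥0∞) * p n := by rw [one_pow, mul_one]
  · rw [Nat.choose_one_right]
    calc (n : ℝ≥0∞) * p n * (∑' t : RTree, gwWeight p t) ^ (n - 1)
        ≤ (n : ℝ≥0∞) * p n * 1 ^ (n - 1) :=
          mul_le_mul_right (pow_le_pow_left' (le_of_lt hW) _) _
      _ = (n : ℝ≥0∞) * p n := by rw [one_pow, mul_one]
  · rw [Nat.choose_one_right]
    have h1 : (∑' t : RTree, gwWeight p t) ^ (i - 1) < 1 := by
      refine pow_lt_one' hW (by omega)
    calc (i : ℝ≥0∞) * p i * (∑' t : RTree, gwWeight p t) ^ (i - 1)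
        < (i : ℝ≥0∞) * p i * 1 := by
          refine ENNReal.mul_lt_mul_right ?_ ?_ h1
          · refine mul_ne_zero ?_ (ne_of_gt hpi)
            exact_mod_cast (by omega : i ≠ 0)
          · exact ENNReal.mul_ne_top (by simp) hpitop
      _ = (i : ℝ≥0∞) * p i := mul_one _

lemma endgame (k : ℕ) (hk : 3 ≤ k) (S Q : ℕ → ℝ) (B1 B2 B3 Bk Mk V : ℝ)
    (hSnn : ∀ x, 0 ≤ S x) (hQnn : ∀ x, 0 ≤ Q x)
    (hSQ : ∀ x, S x = Q x + S (x+1))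
    (hS0 : Filter.Tendsto S Filter.atTop (nhds 0))
    (hMk : 0 < Mk) (hV : 0 < V) (hB3 : 0 ≤ B3) (hB2 : 0 ≤ B2)
    (hBkMk : Bk ≤ Mk)
    (hmaster : ∀ x, S (x+1) + B2 * S (x+1)^2
      ≤ B1 * S (x+1) + B3 * S (x+1)^3 + Bk * S x ^ k)
    (hcase : (B1 = 1 ∧ 2 * B2 = V) ∨ B1 < 1) :
    ∃ xs : ℕ, ∀ x : ℕ, xs ≤ x → Q (x+1) ^ 2 ≤ (3 * Mk / V) * Q x ^ k := by
  have hanti : ∀ x, S (x+1) ≤ S x := by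
    intro x; have h := hSQ x; have h2 := hQnn x; linarith
  have hQS : ∀ x, Q x ≤ S x := by
    intro x; have h := hSQ x; have h2 := hSnn (x+1); linarith
  have hev : ∀ θ : ℝ, 0 < θ → ∃ x₀ : ℕ, ∀ x, x₀ ≤ x → S x ≤ θ := by
    intro θ hθ
    have h1 : ∀ᶠ x in Filter.atTop, S x < θ := hS0.eventually (eventually_lt_nhds hθ)
    obtain ⟨x₀, hx₀⟩ := Filter.eventually_atTop.mp h1
    exact ⟨x₀, fun x hx => le_of_lt (hx₀ x hx)⟩
  have hkpos : (0:ℝ) < k := by positivity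
  obtain ⟨c, hc1, hck⟩ : ∃ c : ℝ, 1 < c ∧ c ^ k = 5/4 := by
    refine ⟨(5/4 : ℝ) ^ ((1:ℝ)/k), ?_, ?_⟩
    · refine Real.one_lt_rpow_iff_of_pos (by norm_num) |>.mpr ?_
      left; constructor <;> [norm_num; positivity]
    · rw [← Real.rpow_natCast ((5/4 : ℝ) ^ ((1:ℝ)/k)) k, ← Real.rpow_mul (by norm_num)]
      rw [one_div, inv_mul_cancel₀ (by positivity)]
      norm_num
  have hc0 : 0 < c := lt_trans one_pos hc1
  obtain ⟨ε, hεc, hε0, hε1⟩ : ∃ ε : ℝ, ε = 1 - 1/c ∧ 0 < ε ∧ ε < 1 := by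
    refine ⟨1 - 1/c, rfl, ?_, ?_⟩
    · have : 1/c < 1 := by rw [div_lt_one hc0]; exact hc1
      linarith
    · have : 0 < 1/c := by positivity
      linarith
  obtain ⟨K1, hK1, hK1pos⟩ : ∃ K1 : ℝ, K1 = (12/5) * (Mk/V) ∧ 0 < K1 :=
    ⟨_, rfl, by positivity⟩
  -- common good property, established in both cases
  have hgood : ∃ x₀ : ℕ, ∀ x, x₀ ≤ x →
      S (x+1) ≤ ε * S x ∧ S (x+1)^2 ≤ K1 * S x ^ k := by
    rcases hcase with ⟨hB1, hB2V⟩ | hB1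
    · -- critical case
      obtain ⟨θ, hθpos, hθ1, hθ2, hθ3⟩ :
          ∃ θ : ℝ, 0 < θ ∧ θ ≤ 1 ∧ B3 * θ ≤ V/12 ∧ K1 * θ ≤ ε^2 := by
        refine ⟨min 1 (min (V/(12*(B3+1))) (ε^2/K1)), ?_, min_le_left _ _, ?_, ?_⟩
        · exact lt_min one_pos (lt_min (by positivity) (by positivity))
        · have hθ2 : min 1 (min (V/(12*(B3+1))) (ε^2/K1)) ≤ V/(12*(B3+1)) :=
            le_trans (min_le_right _ _) (min_le_left _ _)
          have h5 : B3 * min 1 (min (V/(12*(B3+1))) (ε^2/K1)) ≤ B3 * (V/(12*(B3+1))) :=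
            mul_le_mul_of_nonneg_left hθ2 hB3
          have h6 : B3 * (V/(12*(B3+1))) ≤ V/12 := by
            rw [← mul_div_assoc, div_le_div_iff₀ (by positivity) (by norm_num)]
            nlinarith
          linarith
        · have hθ3 : min 1 (min (V/(12*(B3+1))) (ε^2/K1)) ≤ ε^2/K1 :=
            le_trans (min_le_right _ _) (min_le_right _ _)
          have h5 : K1 * min 1 (min (V/(12*(B3+1))) (ε^2/K1)) ≤ K1 * (ε^2/K1) :=
            mul_le_mul_of_nonneg_left hθ3 (le_of_lt hK1pos)
          have h6 : K1 * (ε^2/K1) = ε^2 := by field_simp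
          linarith
      obtain ⟨x₀, hx₀⟩ := hev θ hθpos
      refine ⟨x₀, fun x hx => ?_⟩
      have hbθ : S x ≤ θ := hx₀ x hx
      have haθ : S (x+1) ≤ θ := hx₀ (x+1) (by omega)
      have ha0 : 0 ≤ S (x+1) := hSnn (x+1)
      have hb0 : 0 ≤ S x := hSnn x
      have hm := hmaster x
      rw [hB1, one_mul] at hm
      have hbk : Bk * S x ^ k ≤ Mk * S x ^ k :=
        mul_le_mul_of_nonneg_right hBkMk (by positivity)
      have h2 : (V/2) * S (x+1)^2 ≤ B3 * S (x+1)^3 + Mk * S x ^ k := by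
        have hB2half : B2 = V/2 := by linarith
        rw [← hB2half]; linarith
      have hB3a : B3 * S (x+1) ≤ V/12 := by
        have h4 : B3 * S (x+1) ≤ B3 * θ := mul_le_mul_of_nonneg_left haθ hB3
        linarith
      have h3 : B3 * S (x+1)^3 ≤ (V/12) * S (x+1)^2 := by
        have he : B3 * S (x+1)^3 = (B3 * S (x+1)) * S (x+1)^2 := by ring
        rw [he]
        exact mul_le_mul_of_nonneg_right hB3a (by positivity)
      have h4 : (5*V/12) * S (x+1)^2 ≤ Mk * S x ^ k := by linarith
      have hsq : S (x+1)^2 ≤ K1 * S x ^ k := by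
        have h5 := mul_le_mul_of_nonneg_left h4
          (le_of_lt (show (0:ℝ) < 12/(5*V) by positivity))
        calc S (x+1)^2 = (12/(5*V)) * ((5*V/12) * S (x+1)^2) := by field_simp
          _ ≤ (12/(5*V)) * (Mk * S x ^ k) := h5
          _ = K1 * S x ^ k := by rw [hK1]; field_simp
      refine ⟨?_, hsq⟩
      have hbk2 : S x ^ k ≤ θ * S x ^ 2 := by
        have hsplit : S x ^ k = S x ^ (k-2) * S x ^ 2 := by
          rw [← pow_add]; congr 1; omega
        rw [hsplit]
        refine mul_le_mul_of_nonneg_right ?_ (by positivity)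
        calc S x ^ (k-2) ≤ θ ^ (k-2) := pow_le_pow_left₀ hb0 hbθ _
          _ ≤ θ := pow_le_of_le_one (le_of_lt hθpos) hθ1 (by omega)
      have h7 : S (x+1)^2 ≤ (ε * S x)^2 := by
        have h8 : K1 * S x ^ k ≤ K1 * (θ * S x ^ 2) :=
          mul_le_mul_of_nonneg_left hbk2 (le_of_lt hK1pos)
        calc S (x+1)^2 ≤ K1 * S x ^ k := hsq
          _ ≤ K1 * (θ * S x ^ 2) := h8
          _ = (K1 * θ) * S x ^ 2 := by ring
          _ ≤ ε^2 * S x ^ 2 := mul_le_mul_of_nonneg_right hθ3 (by positivity)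
          _ = (ε * S x)^2 := by ring
      exact (pow_le_pow_iff_left₀ ha0 (by positivity) (by norm_num)).mp h7
    · -- subcritical case
      obtain ⟨g, hgB, hgpos⟩ : ∃ g : ℝ, g = 1 - B1 ∧ 0 < g := ⟨_, rfl, by linarith⟩
      obtain ⟨K2, hK2, hK2pos⟩ : ∃ K2 : ℝ, K2 = 2 * Mk / g ∧ 0 < K2 :=
        ⟨_, rfl, div_pos (by linarith) hgpos⟩
      obtain ⟨θ, hθpos, hθ1, hθ2, hθ3, hθ4⟩ :
          ∃ θ : ℝ, 0 < θ ∧ θ ≤ 1 ∧ B3 * θ ≤ g/2 ∧ K2 * θ ≤ ε ∧ K2^2 * θ ≤ K1 := by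
        refine ⟨min 1 (min (g/(2*(B3+1))) (min (ε/K2) (K1/(K2^2)))), ?_, min_le_left _ _,
          ?_, ?_, ?_⟩
        · refine lt_min one_pos (lt_min (by positivity) (lt_min (by positivity) (by positivity)))
        · have hθ2 : min 1 (min (g/(2*(B3+1))) (min (ε/K2) (K1/(K2^2)))) ≤ g/(2*(B3+1)) :=
            le_trans (min_le_right _ _) (min_le_left _ _)
          have h5 := mul_le_mul_of_nonneg_left hθ2 hB3
          have h6 : B3 * (g/(2*(B3+1))) ≤ g/2 := by
            rw [← mul_div_assoc, div_le_div_iff₀ (by positivity) (by norm_num)]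
            nlinarith
          linarith
        · have hθ3 : min 1 (min (g/(2*(B3+1))) (min (ε/K2) (K1/(K2^2)))) ≤ ε/K2 :=
            le_trans (min_le_right _ _) (le_trans (min_le_right _ _) (min_le_left _ _))
          have h5 := mul_le_mul_of_nonneg_left hθ3 (le_of_lt hK2pos)
          have h6 : K2 * (ε/K2) = ε := by field_simp
          linarith
        · have hθ4 : min 1 (min (g/(2*(B3+1))) (min (ε/K2) (K1/(K2^2)))) ≤ K1/(K2^2) :=
            le_trans (min_le_right _ _) (le_trans (min_le_right _ _) (min_le_right _ _))
          have h5 := mul_le_mul_of_nonneg_left hθ4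
            (le_of_lt (show (0:ℝ) < K2^2 by positivity))
          have h6 : K2^2 * (K1/(K2^2)) = K1 := by field_simp
          linarith
      obtain ⟨x₀, hx₀⟩ := hev θ hθpos
      refine ⟨x₀, fun x hx => ?_⟩
      have hbθ : S x ≤ θ := hx₀ x hx
      have haθ : S (x+1) ≤ θ := hx₀ (x+1) (by omega)
      have ha0 : 0 ≤ S (x+1) := hSnn (x+1)
      have hb0 : 0 ≤ S x := hSnn x
      have hm := hmaster x
      have h1 : g * S (x+1) ≤ B3 * S (x+1)^3 + Mk * S x ^ k := by
        have hbk : Bk * S x ^ k ≤ Mk * S x ^ k :=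
          mul_le_mul_of_nonneg_right hBkMk (by positivity)
        have hB2a : 0 ≤ B2 * S (x+1)^2 := by positivity
        rw [hgB]; linarith
      have hB3a : B3 * S (x+1)^2 ≤ g/2 := by
        have h7 : S (x+1)^2 ≤ θ := by
          calc S (x+1)^2 ≤ θ^2 := pow_le_pow_left₀ ha0 haθ _
            _ ≤ θ := pow_le_of_le_one (le_of_lt hθpos) hθ1 (by norm_num)
        have h8 := mul_le_mul_of_nonneg_left h7 hB3
        linarith
      have h2 : (g/2) * S (x+1) ≤ Mk * S x ^ k := by
        have h3 : B3 * S (x+1)^3 ≤ (g/2) * S (x+1) := by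
          have he : B3 * S (x+1)^3 = (B3 * S (x+1)^2) * S (x+1) := by ring
          rw [he]
          exact mul_le_mul_of_nonneg_right hB3a ha0
        linarith
      have hakey : S (x+1) ≤ K2 * S x ^ k := by
        have h5 := mul_le_mul_of_nonneg_left h2
          (le_of_lt (show (0:ℝ) < 2/g by positivity))
        calc S (x+1) = (2/g) * ((g/2) * S (x+1)) := by field_simp
          _ ≤ (2/g) * (Mk * S x ^ k) := h5
          _ = K2 * S x ^ k := by rw [hK2]; field_simp
      have hbklek : S x ^ k ≤ θ := by
        calc S x ^ k ≤ θ^k := pow_le_pow_left₀ hb0 hbθ _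
          _ ≤ θ := pow_le_of_le_one (le_of_lt hθpos) hθ1 (by omega)
      constructor
      · have hbk1 : S x ^ k ≤ θ * S x := by
          have hsplit : S x ^ k = S x ^ (k-1) * S x := by
            rw [← pow_succ]; congr 1; omega
          rw [hsplit]
          refine mul_le_mul_of_nonneg_right ?_ hb0
          calc S x ^ (k-1) ≤ θ ^ (k-1) := pow_le_pow_left₀ hb0 hbθ _
            _ ≤ θ := pow_le_of_le_one (le_of_lt hθpos) hθ1 (by omega)
        calc S (x+1) ≤ K2 * S x ^ k := hakey
          _ ≤ K2 * (θ * S x) := mul_le_mul_of_nonneg_left hbk1 (le_of_lt hK2pos)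
          _ = (K2 * θ) * S x := by ring
          _ ≤ ε * S x := mul_le_mul_of_nonneg_right hθ3 hb0
      · have hsq0 : S (x+1)^2 ≤ (K2 * S x ^ k)^2 :=
          pow_le_pow_left₀ ha0 hakey _
        calc S (x+1)^2 ≤ (K2 * S x ^ k)^2 := hsq0
          _ = K2^2 * S x ^ k * S x ^ k := by ring
          _ ≤ K2^2 * θ * S x ^ k := by
              refine mul_le_mul_of_nonneg_right ?_ (by positivity)
              exact mul_le_mul_of_nonneg_left hbklek (by positivity)
          _ ≤ K1 * S x ^ k := mul_le_mul_of_nonneg_right hθ4 (by positivity)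
  -- final assembly
  obtain ⟨x₀, hx₀⟩ := hgood
  refine ⟨x₀, fun x hx => ?_⟩
  obtain ⟨hrat, hsq⟩ := hx₀ x hx
  have hb0 : 0 ≤ S x := hSnn x
  have hScQ : S x ≤ c * Q x := by
    have h1 : S x = Q x + S (x+1) := hSQ x
    have h2 : (1 - ε) * S x ≤ Q x := by nlinarith
    have h3 : (1/c) * S x ≤ Q x := by
      rw [hεc] at h2; linarith
    have h4 := mul_le_mul_of_nonneg_left h3 (le_of_lt hc0)
    calc S x = c * ((1/c) * S x) := by field_simp
      _ ≤ c * Q x := h4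
  have hQ2 : Q (x+1)^2 ≤ S (x+1)^2 :=
    pow_le_pow_left₀ (hQnn (x+1)) (hQS (x+1)) _
  have hSk : S x ^ k ≤ c^k * Q x ^ k := by
    calc S x ^ k ≤ (c * Q x)^k := pow_le_pow_left₀ hb0 hScQ _
      _ = c^k * Q x ^ k := mul_pow _ _ _
  calc Q (x+1)^2 ≤ S (x+1)^2 := hQ2
    _ ≤ K1 * S x ^ k := hsq
    _ ≤ K1 * (c^k * Q x ^ k) := mul_le_mul_of_nonneg_left hSk (le_of_lt hK1pos)
    _ = (3 * Mk / V) * Q x ^ k := by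
        rw [hck, hK1]; field_simp; ring

theorem main_thm (k : ℕ) (hk : 3 ≤ k) (p : ℕ → ℝ≥0∞)
    (hsum : ∑' i : ℕ, p i = 1) (hmean : ∑' i : ℕ, (i : ℝ≥0∞) * p i = 1)
    (hvarpos : 1 < ∑' i : ℕ, (i : ℝ≥0∞) ^ 2 * p i)
    (hmom : ∑' i : ℕ, (i : ℝ≥0∞) ^ (k + 1) * p i < ⊤)
    (hpk : ∃ i, k ≤ i ∧ 0 < p i) :
    ∃ xs : ℕ, ∀ x : ℕ, xs ≤ x →
      (qfun p k x) ≤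
        (3 * (∑' i : ℕ, (Nat.choose i k : ℝ≥0∞) * p i) /
            ((∑' i : ℕ, (i : ℝ≥0∞) ^ 2 * p i) - 1)) ^ ((1 : ℝ) / 2) *
          (qfun p k (x - 1)) ^ ((k : ℝ) / 2) := by
  classical
  obtain ⟨i0, hi0k, hpi0⟩ := hpk
  have hptop : p i0 ≠ ⊤ := by
    refine ne_top_of_le_ne_top ENNReal.one_ne_top ?_
    rw [← hsum]; exact ENNReal.le_tsum i0
  -- moment finiteness
  have hm2top : (∑' i : ℕ, (i : ℝ≥0∞) ^ 2 * p i) ≠ ⊤ := by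
    refine ne_top_of_le_ne_top hmom.ne ?_
    refine ENNReal.tsum_le_tsum (fun n => mul_le_mul_left ?_ _)
    rcases Nat.eq_zero_or_pos n with rfl | hn
    · simp
    · have h1 : (1:ℝ≥0∞) ≤ (n:ℝ≥0∞) := by exact_mod_cast hn
      exact pow_le_pow_right₀ h1 (by omega)
  have hμktop : mucoef p k ≠ ⊤ :=
    ne_top_of_le_ne_top hmom.ne (mucoef_le_moment p k (by omega) k (by omega))
  have hμ3top : mucoef p 3 ≠ ⊤ :=
    ne_top_of_le_ne_top hmom.ne (mucoef_le_moment p 3 (by omega) k (by omega))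
  have hμ2top : mucoef p 2 ≠ ⊤ :=
    ne_top_of_le_ne_top hmom.ne (mucoef_le_moment p 2 (by omega) k (by omega))
  have hμ1 : mucoef p 1 = 1 := mucoef_one p hmean
  have hμkpos : 0 < mucoef p k := mucoef_pos p k ⟨i0, hi0k, hpi0⟩
  have hmc1top : mcoef p 1 ≠ ⊤ := by
    refine ne_top_of_le_ne_top ?_ (mcoef_le_mucoef p hsum 1)
    rw [hμ1]; exact ENNReal.one_ne_top
  have hmc2top : mcoef p 2 ≠ ⊤ := ne_top_of_le_ne_top hμ2top (mcoef_le_mucoef p hsum 2)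
  have hmc3top : mcoef p 3 ≠ ⊤ := ne_top_of_le_ne_top hμ3top (mcoef_le_mucoef p hsum 3)
  have hmcktop : mcoef p k ≠ ⊤ := ne_top_of_le_ne_top hμktop (mcoef_le_mucoef p hsum k)
  -- s and q basics
  have hsfin : ∀ x, sfun p k x ≠ ⊤ :=
    fun x => ne_top_of_le_ne_top ENNReal.one_ne_top (sfun_le p hsum k x)
  have hqles : ∀ x, qfun p k x ≤ sfun p k x := by
    intro x
    rw [sfun_eq_add p k x]
    exact le_self_add
  have hqfin : ∀ x, qfun p k x ≠ ⊤ :=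
    fun x => ne_top_of_le_ne_top (hsfin x) (hqles x)
  -- real quantities
  set S : ℕ → ℝ := fun x => (sfun p k x).toReal with hS
  set Q : ℕ → ℝ := fun x => (qfun p k x).toReal with hQ
  set B1 : ℝ := (mcoef p 1).toReal with hB1
  set B2 : ℝ := (mcoef p 2).toReal with hB2
  set B3 : ℝ := (mcoef p 3).toReal with hB3
  set Bk : ℝ := (mcoef p k).toReal with hBk
  set Mk : ℝ := (mucoef p k).toReal with hMk
  set V : ℝ := ((∑' i : ℕ, (i : ℝ≥0∞) ^ 2 * p i) - 1).toReal with hV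
  have hVeq : V = (∑' i : ℕ, (i : ℝ≥0∞) ^ 2 * p i).toReal - 1 := by
    rw [hV, ENNReal.toReal_sub_of_le (le_of_lt hvarpos) hm2top, ENNReal.toReal_one]
  have hm2gt1 : (1:ℝ) < (∑' i : ℕ, (i : ℝ≥0∞) ^ 2 * p i).toReal := by
    have := (ENNReal.toReal_lt_toReal ENNReal.one_ne_top hm2top).mpr hvarpos
    rwa [ENNReal.toReal_one] at this
  have hVpos : 0 < V := by rw [hVeq]; linarith
  have hMkpos : 0 < Mk := ENNReal.toReal_pos (ne_of_gt hμkpos) hμktop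
  have hSnn : ∀ x, 0 ≤ S x := fun x => ENNReal.toReal_nonneg
  have hQnn : ∀ x, 0 ≤ Q x := fun x => ENNReal.toReal_nonneg
  have hSQ : ∀ x, S x = Q x + S (x+1) := by
    intro x
    rw [hS, hQ]
    simp only
    rw [← ENNReal.toReal_add (hqfin x) (hsfin (x+1)), ← sfun_eq_add p k x]
  have hS0 : Filter.Tendsto S Filter.atTop (nhds 0) := by
    have h1 := sfun_tendsto p hsum k
    have h2 := (ENNReal.tendsto_toReal (a := 0) (by simp)).comp h1
    rwa [ENNReal.toReal_zero] at h2
  have hmaster_real : ∀ x, S (x+1) + B2 * S (x+1)^2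
      ≤ B1 * S (x+1) + B3 * S (x+1)^3 + Bk * S x ^ k := by
    intro x
    have hm := master p k hk x
    have hRfin : mcoef p 1 * sfun p k (x+1) + mcoef p 3 * sfun p k (x+1) ^ 3
        + mcoef p k * sfun p k x ^ k ≠ ⊤ := by
      refine ENNReal.add_ne_top.mpr ⟨ENNReal.add_ne_top.mpr ⟨?_, ?_⟩, ?_⟩
      · exact ENNReal.mul_ne_top hmc1top (hsfin _)
      · exact ENNReal.mul_ne_top hmc3top (ENNReal.pow_ne_top (hsfin _))
      · exact ENNReal.mul_ne_top hmcktop (ENNReal.pow_ne_top (hsfin _))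
    have hR := ENNReal.toReal_mono hRfin hm
    have eL : (sfun p k (x+1) + mcoef p 2 * sfun p k (x+1) ^ 2).toReal
        = S (x+1) + B2 * S (x+1)^2 := by
      rw [ENNReal.toReal_add (hsfin _) (ENNReal.mul_ne_top hmc2top (ENNReal.pow_ne_top (hsfin _)))]
      rw [ENNReal.toReal_mul, ENNReal.toReal_pow]
    have eR : (mcoef p 1 * sfun p k (x+1) + mcoef p 3 * sfun p k (x+1) ^ 3
        + mcoef p k * sfun p k x ^ k).toReal
        = B1 * S (x+1) + B3 * S (x+1)^3 + Bk * S x ^ k := by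
      rw [ENNReal.toReal_add (ENNReal.add_ne_top.mpr ⟨ENNReal.mul_ne_top hmc1top (hsfin _),
        ENNReal.mul_ne_top hmc3top (ENNReal.pow_ne_top (hsfin _))⟩)
        (ENNReal.mul_ne_top hmcktop (ENNReal.pow_ne_top (hsfin _)))]
      rw [ENNReal.toReal_add (ENNReal.mul_ne_top hmc1top (hsfin _))
        (ENNReal.mul_ne_top hmc3top (ENNReal.pow_ne_top (hsfin _)))]
      rw [ENNReal.toReal_mul, ENNReal.toReal_mul, ENNReal.toReal_mul,
        ENNReal.toReal_pow, ENNReal.toReal_pow]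
    rw [eL, eR] at hR
    exact hR
  have hB3nn : 0 ≤ B3 := ENNReal.toReal_nonneg
  have hB2nn : 0 ≤ B2 := ENNReal.toReal_nonneg
  have hBkMk : Bk ≤ Mk := ENNReal.toReal_mono hμktop (mcoef_le_mucoef p hsum k)
  have hcase : (B1 = 1 ∧ 2 * B2 = V) ∨ B1 < 1 := by
    rcases lt_or_eq_of_le (W_le_one p hsum) with hWlt | hWeq
    · right
      have h1 := mcoef_one_lt p hmean hWlt i0 (by omega) hpi0 hptop
      have := (ENNReal.toReal_lt_toReal hmc1top ENNReal.one_ne_top).mpr h1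
      rwa [ENNReal.toReal_one] at this
    · left
      constructor
      · rw [hB1, mcoef_eq_of_W_eq_one p hWeq 1, hμ1, ENNReal.toReal_one]
      · have h2 := mucoef_two p hmean
        have h3 : (2 * mucoef p 2 + 1).toReal
            = (∑' i : ℕ, (i : ℝ≥0∞) ^ 2 * p i).toReal := by rw [h2]
        rw [ENNReal.toReal_add (ENNReal.mul_ne_top (by simp) hμ2top) ENNReal.one_ne_top,
          ENNReal.toReal_mul, ENNReal.toReal_one] at h3
        rw [hB2, mcoef_eq_of_W_eq_one p hWeq 2, hVeq]
        have : (2:ℝ≥0∞).toReal = 2 := by simp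
        rw [this] at h3
        linarith
  obtain ⟨xs0, hend⟩ := endgame k hk S Q B1 B2 B3 Bk Mk V hSnn hQnn hSQ hS0
    hMkpos hVpos hB3nn hB2nn hBkMk hmaster_real hcase
  refine ⟨xs0 + 1, fun x hx => ?_⟩
  have hx1 : xs0 ≤ x - 1 := by omega
  have hxe : x - 1 + 1 = x := by omega
  have hreal : Q x ^ 2 ≤ (3 * Mk / V) * Q (x-1) ^ k := by
    have := hend (x-1) hx1
    rwa [hxe] at this
  -- back to ℝ≥0∞
  set C : ℝ≥0∞ := 3 * (∑' i : ℕ, (Nat.choose i k : ℝ≥0∞) * p i) /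
      ((∑' i : ℕ, (i : ℝ≥0∞) ^ 2 * p i) - 1) with hC
  have hCμ : (∑' i : ℕ, (Nat.choose i k : ℝ≥0∞) * p i) = mucoef p k := rfl
  have hDne : ((∑' i : ℕ, (i : ℝ≥0∞) ^ 2 * p i) - 1) ≠ 0 := by
    rw [ne_eq, tsub_eq_zero_iff_le]
    exact not_le_of_gt hvarpos
  have hCtop : C ≠ ⊤ := by
    rw [hC]
    refine (ENNReal.div_lt_top ?_ hDne).ne
    exact ENNReal.mul_ne_top (by simp) (by rw [hCμ]; exact hμktop)
  have hCtoReal : C.toReal = 3 * Mk / V := by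
    rw [hC, ENNReal.toReal_div, ENNReal.toReal_mul, hCμ, ← hMk, ← hV]
    norm_num
  have hsqE : qfun p k x ^ 2 ≤ C * qfun p k (x-1) ^ k := by
    refine (ENNReal.toReal_le_toReal (ENNReal.pow_ne_top (hqfin x))
      (ENNReal.mul_ne_top hCtop (ENNReal.pow_ne_top (hqfin (x-1))))).mp ?_
    rw [ENNReal.toReal_pow, ENNReal.toReal_mul, ENNReal.toReal_pow, hCtoReal]
    exact hreal
  -- rpow manipulation
  have h2 : qfun p k x = (qfun p k x ^ 2) ^ ((1:ℝ)/2) := by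
    rw [← ENNReal.rpow_natCast (qfun p k x) 2, ← ENNReal.rpow_mul]
    norm_num
  calc qfun p k x = (qfun p k x ^ 2) ^ ((1:ℝ)/2) := h2
    _ ≤ (C * qfun p k (x-1) ^ k) ^ ((1:ℝ)/2) := ENNReal.rpow_le_rpow hsqE (by norm_num)
    _ = C ^ ((1:ℝ)/2) * (qfun p k (x-1) ^ k) ^ ((1:ℝ)/2) :=
        ENNReal.mul_rpow_of_nonneg _ _ (by norm_num)
    _ = C ^ ((1:ℝ)/2) * qfun p k (x-1) ^ ((k:ℝ)/2) := by
        congr 1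
        rw [← ENNReal.rpow_natCast (qfun p k (x-1)) k, ← ENNReal.rpow_mul]
        congr 1
        ring

end RTree


/-- tail recursion for the `k`-ary register function of a critical
Galton-Watson tree: for large `x`, `q_x ≤ √(3 μ_k/σ²) q_{x-1}^{k/2}`. -/
theorem kary_register_tail_recursion (k : ℕ) (hk : 3 ≤ k) (p : ℕ → ℝ≥0∞)
    (hsum : ∑' i : ℕ, p i = 1) (hmean : ∑' i : ℕ, (i : ℝ≥0∞) * p i = 1)
    (hvarpos : 1 < ∑' i : ℕ, (i : ℝ≥0∞) ^ 2 * p i)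
    (hmom : ∑' i : ℕ, (i : ℝ≥0∞) ^ (k + 1) * p i < ⊤)
    (hpk : ∃ i, k ≤ i ∧ 0 < p i) :
    ∃ xs : ℕ, ∀ x : ℕ, xs ≤ x →
      (∑' t : RTree, if RTree.Kreg k t = x then RTree.gwWeight p t else 0) ≤
        (3 * (∑' i : ℕ, (Nat.choose i k : ℝ≥0∞) * p i) /
            ((∑' i : ℕ, (i : ℝ≥0∞) ^ 2 * p i) - 1)) ^ ((1 : ℝ) / 2) *
          (∑' t : RTree, if RTree.Kreg k t = x - 1 then RTree.gwWeight p t else 0) ^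
            ((k : ℝ) / 2) := by
  exact RTree.main_thm k hk p hsum hmean hvarpos hmom hpk
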